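/- For any λ ∈ ℝⁿ, the sign of X(λ) := Σ_{0≤2j≤n}(−1)^j σ_{2j}(λ) coincides with the sign of cos(Σ_{i=1}^n arctan λ_i), and the sign of Y(λ) := Σ_{0≤2j+1≤n}(−1)^j σ_{2j+1}(λ) coincides with the sign of sin(Σ_{i=1}^n arctan λ_i). -/

import Mathlib

open Finset

/-- The `k`-th elementary symmetric polynomial of `a : Fin n → ℝ`. -/
noncomputable def esymm (n k : ℕ) (a : Fin n → ℝ) : ℝ :=
  ∑ s ∈ Finset.powersetCard k (Finset.univ : Finset (Fin n)), ∏ i ∈ s, a i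

/-- The `k`-th elementary symmetric polynomial of `a` with the `i`-th entry removed. -/
noncomputable def esymmDel (n k : ℕ) (a : Fin n → ℝ) (i : Fin n) : ℝ :=
  ∑ s ∈ Finset.powersetCard k ((Finset.univ : Finset (Fin n)).erase i), ∏ j ∈ s, a j


/-- X(λ) = Σ_{0≤2j≤n} (−1)^j σ_{2j}(λ). -/
noncomputable def Xpoly (n : ℕ) (a : Fin n → ℝ) : ℝ :=
  ∑ j ∈ Finset.range (n / 2 + 1), (-1 : ℝ) ^ j * esymm n (2 * j) a

/-- Y(λ) = Σ_{0≤2j+1≤n} (−1)^j σ_{2j+1}(λ). -/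
noncomputable def Ypoly (n : ℕ) (a : Fin n → ℝ) : ℝ :=
  ∑ j ∈ Finset.range ((n + 1) / 2), (-1 : ℝ) ^ j * esymm n (2 * j + 1) a

/-- X̂(λ) = Σ_{0≤2j≤n} (−1)^j (2j) σ_{2j}(λ). -/
noncomputable def Xhat (n : ℕ) (a : Fin n → ℝ) : ℝ :=
  ∑ j ∈ Finset.range (n / 2 + 1), (-1 : ℝ) ^ j * (2 * j : ℝ) * esymm n (2 * j) a

/-- Ŷ(λ) = Σ_{0≤2j+1≤n} (−1)^j (2j+1) σ_{2j+1}(λ). -/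
noncomputable def Yhat (n : ℕ) (a : Fin n → ℝ) : ℝ :=
  ∑ j ∈ Finset.range ((n + 1) / 2), (-1 : ℝ) ^ j * (2 * j + 1 : ℝ) * esymm n (2 * j + 1) a

/-- The Lagrangian phase H(λ) = Σ arctan λ_i. -/
noncomputable def phaseH (n : ℕ) (a : Fin n → ℝ) : ℝ :=
  ∑ i, Real.arctan (a i)

section Aux
open Finset Complex

private lemma sum_range_even_odd' (f : ℕ → ℂ) : ∀ m : ℕ,
    ∑ k ∈ Finset.range m, f k =
      (∑ j ∈ Finset.range ((m + 1) / 2), f (2 * j)) +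
        ∑ j ∈ Finset.range (m / 2), f (2 * j + 1) := by
  intro m
  induction m with
  | zero => simp
  | succ m ih =>
    rw [Finset.sum_range_succ, ih]
    rcases Nat.even_or_odd m with ⟨t, rfl⟩ | ⟨t, rfl⟩
    · have h1 : (t + t + 1 + 1) / 2 = t + 1 := by omega
      have h2 : (t + t + 1) / 2 = t := by omega
      have h3 : (t + t) / 2 = t := by omega
      rw [h1, h2, h3, Finset.sum_range_succ]
      have : 2 * t = t + t := by ring
      rw [this]; ring
    · have h1 : (2 * t + 1 + 1 + 1) / 2 = t + 1 := by omega
      have h2 : (2 * t + 1 + 1) / 2 = t + 1 := by omega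
      have h3 : (2 * t + 1) / 2 = t := by omega
      rw [h1, h2, h3, Finset.sum_range_succ (f := fun j => f (2 * j + 1))]
      ring

private lemma sign_mul_of_pos {r x : ℝ} (hr : 0 < r) :
    Real.sign (r * x) = Real.sign x := by
  rcases lt_trichotomy x 0 with h | h | h
  · rw [Real.sign_of_neg h, Real.sign_of_neg (mul_neg_of_pos_of_neg hr h)]
  · simp [h]
  · rw [Real.sign_of_pos h, Real.sign_of_pos (mul_pos hr h)]

private lemma prod_eq_sum_I_pow (n : ℕ) (a : Fin n → ℝ) :
    (∏ i, (1 + (a i : ℂ) * Complex.I)) =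
      ∑ k ∈ Finset.range (n + 1), Complex.I ^ k * (esymm n k a : ℂ) := by
  classical
  have h1 : (∏ i, (1 + (a i : ℂ) * Complex.I)) =
      ∑ t ∈ (Finset.univ : Finset (Fin n)).powerset,
        (∏ i ∈ t, (a i : ℂ) * Complex.I) := by
    simp_rw [add_comm (1 : ℂ)]
    rw [Finset.prod_add]
    simp
  rw [h1, Finset.powerset_card_disjiUnion]
  refine (Finset.sum_disjiUnion _ _ _).trans ?_
  rw [Finset.card_univ, Fintype.card_fin]
  refine Finset.sum_congr rfl fun k _ => ?_
  rw [esymm]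
  push_cast
  rw [Finset.mul_sum]
  refine Finset.sum_congr rfl fun t ht => ?_
  have hc : t.card = k := (Finset.mem_powersetCard.mp ht).2
  rw [Finset.prod_mul_distrib, Finset.prod_const, hc, mul_comm]

private lemma prod_eq_XY (n : ℕ) (a : Fin n → ℝ) :
    (∏ i, (1 + (a i : ℂ) * Complex.I)) =
      (Xpoly n a : ℂ) + (Ypoly n a : ℂ) * Complex.I := by
  rw [prod_eq_sum_I_pow, sum_range_even_odd' (fun k => Complex.I ^ k * (esymm n k a : ℂ)) (n + 1)]
  have h2 : (n + 1 + 1) / 2 = n / 2 + 1 := by omega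
  rw [h2, Xpoly, Ypoly]
  push_cast
  rw [Finset.sum_mul]
  congr 1
  · refine Finset.sum_congr rfl fun j _ => ?_
    rw [pow_mul, Complex.I_sq]
  · refine Finset.sum_congr rfl fun j _ => ?_
    rw [pow_succ, pow_mul, Complex.I_sq]
    ring

private lemma prod_eq_polar (n : ℕ) (a : Fin n → ℝ) :
    (∏ i, (1 + (a i : ℂ) * Complex.I)) =
      ((∏ i, Real.sqrt (1 + a i ^ 2) : ℝ) : ℂ) *
        ((Real.cos (phaseH n a) : ℂ) + (Real.sin (phaseH n a) : ℂ) * Complex.I) := by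
  have key : ∀ i, (1 + (a i : ℂ) * Complex.I) =
      ((Real.sqrt (1 + a i ^ 2) : ℝ) : ℂ) * Complex.exp ((Real.arctan (a i) : ℂ) * Complex.I) := by
    intro i
    have hs : (0 : ℝ) < Real.sqrt (1 + a i ^ 2) :=
      Real.sqrt_pos.mpr (by positivity)
    rw [Complex.exp_mul_I]
    have hc : Complex.cos (Real.arctan (a i) : ℂ) = ((Real.cos (Real.arctan (a i)) : ℝ) : ℂ) := by
      rw [Complex.ofReal_cos]
    have hsi : Complex.sin (Real.arctan (a i) : ℂ) = ((Real.sin (Real.arctan (a i)) : ℝ) : ℂ) := by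
      rw [Complex.ofReal_sin]
    have e1 : Real.sqrt (1 + a i ^ 2) * (1 / Real.sqrt (1 + a i ^ 2)) = 1 := by
      field_simp
    have e2 : Real.sqrt (1 + a i ^ 2) * (a i / Real.sqrt (1 + a i ^ 2)) = a i := by
      field_simp
    rw [hc, hsi, Real.cos_arctan, Real.sin_arctan, mul_add, ← mul_assoc,
      ← Complex.ofReal_mul, ← Complex.ofReal_mul, e1, e2, Complex.ofReal_one]
  calc (∏ i, (1 + (a i : ℂ) * Complex.I))
      = ∏ i, (((Real.sqrt (1 + a i ^ 2) : ℝ) : ℂ) *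
          Complex.exp ((Real.arctan (a i) : ℂ) * Complex.I)) := by
        exact Finset.prod_congr rfl fun i _ => key i
    _ = (∏ i, ((Real.sqrt (1 + a i ^ 2) : ℝ) : ℂ)) *
          ∏ i, Complex.exp ((Real.arctan (a i) : ℂ) * Complex.I) := Finset.prod_mul_distrib
    _ = ((∏ i, Real.sqrt (1 + a i ^ 2) : ℝ) : ℂ) *
          Complex.exp ((phaseH n a : ℝ) * Complex.I) := by
        rw [← Complex.exp_sum, ← Finset.sum_mul, phaseH]
        push_cast
        ring_nf
    _ = _ := by
        rw [Complex.exp_mul_I, Complex.ofReal_cos, Complex.ofReal_sin]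

end Aux

/-- X(λ) has the same sign as cos H(λ), and Y(λ) has the same sign as sin H(λ). -/
theorem sign_X_Y_eq_sign_cos_sin (n : ℕ) (a : Fin n → ℝ) :
    Real.sign (Xpoly n a) = Real.sign (Real.cos (phaseH n a)) ∧
    Real.sign (Ypoly n a) = Real.sign (Real.sin (phaseH n a)) := by
  have hP := (prod_eq_XY n a).symm.trans (prod_eq_polar n a)
  set R := ∏ i, Real.sqrt (1 + a i ^ 2) with hR
  have hRpos : 0 < R := Finset.prod_pos fun i _ => Real.sqrt_pos.mpr (by positivity)
  have hre : Xpoly n a = R * Real.cos (phaseH n a) := by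
    have := congrArg Complex.re hP
    simpa [Complex.cos_ofReal_re] using this
  have him : Ypoly n a = R * Real.sin (phaseH n a) := by
    have := congrArg Complex.im hP
    simpa [Complex.sin_ofReal_re] using this
  rw [hre, him, sign_mul_of_pos hRpos, sign_mul_of_pos hRpos]
  exact ⟨rfl, rfl⟩
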